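/- The spatial gradients of a rotating wave profile are rotated by the linearization: let f : ℝ^N → ℝ^N be continuously differentiable, let d₁,…,d_N > 0, let ω ∈ ℝ, and let u* : ℝ² → ℝ^N be three times continuously differentiable and satisfy D Δu*(y) + ω (∂_ψ u*)(y) + f(u*(y)) = 0 for all y ∈ ℝ². Then for all y ∈ ℝ²: D Δ(∂₁u*)(y) + ω ∂_ψ(∂₁u*)(y) + f'(u*(y)) (∂₁u*)(y) = −ω (∂₂u*)(y), and D Δ(∂₂u*)(y) + ω ∂_ψ(∂₂u*)(y) + f'(u*(y)) (∂₂u*)(y) = ω (∂₁u*)(y). -/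

import Mathlib

open Real

/-- The partial derivative `∂ᵢ u` in the `i`-th coordinate direction. -/
noncomputable def pd {N : ℕ} (i : Fin 2)
    (u : EuclideanSpace ℝ (Fin 2) → EuclideanSpace ℝ (Fin N))
    (y : EuclideanSpace ℝ (Fin 2)) : EuclideanSpace ℝ (Fin N) :=
  fderiv ℝ u y (EuclideanSpace.single i 1)

/-- The componentwise Laplacian `Δu = ∂₁₁u + ∂₂₂u`. -/
noncomputable def lapOp {N : ℕ} (u : EuclideanSpace ℝ (Fin 2) → EuclideanSpace ℝ (Fin N))
    (y : EuclideanSpace ℝ (Fin 2)) : EuclideanSpace ℝ (Fin N) :=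
  pd 0 (pd 0 u) y + pd 1 (pd 1 u) y

/-- The rotational derivative `(∂_ψ u)(y) = y₁ ∂₂u(y) − y₂ ∂₁u(y)`. -/
noncomputable def rotDeriv {N : ℕ}
    (u : EuclideanSpace ℝ (Fin 2) → EuclideanSpace ℝ (Fin N))
    (y : EuclideanSpace ℝ (Fin 2)) : EuclideanSpace ℝ (Fin N) :=
  y 0 • pd 1 u y - y 1 • pd 0 u y

/-- The action of the diagonal matrix `D = diag(d₁, …, d_N)`. -/
noncomputable def dmul {N : ℕ} (d : Fin N → ℝ) (v : EuclideanSpace ℝ (Fin N)) :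
    EuclideanSpace ℝ (Fin N) :=
  (WithLp.equiv 2 (Fin N → ℝ)).symm (fun i => d i * v i)

namespace SGRL

noncomputable def ee (i : Fin 2) : EuclideanSpace ℝ (Fin 2) := EuclideanSpace.single i 1

variable {N : ℕ}

noncomputable def dmulL (d : Fin N → ℝ) :
    EuclideanSpace ℝ (Fin N) →L[ℝ] EuclideanSpace ℝ (Fin N) :=
  LinearMap.toContinuousLinearMap
    { toFun := fun v => (WithLp.equiv 2 (Fin N → ℝ)).symm (fun i => d i * v i)
      map_add' := fun a b => by ext i; simp [mul_add]
      map_smul' := fun c a => by ext i; simp; ring }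

lemma dmul_eq (d : Fin N → ℝ) (v : EuclideanSpace ℝ (Fin N)) : dmul d v = dmulL d v := rfl

lemma dmul_add (d : Fin N → ℝ) (a b : EuclideanSpace ℝ (Fin N)) :
    dmul d (a + b) = dmul d a + dmul d b := by
  rw [dmul_eq, dmul_eq, dmul_eq, map_add]

variable {w : EuclideanSpace ℝ (Fin 2) → EuclideanSpace ℝ (Fin N)}
variable {y : EuclideanSpace ℝ (Fin 2)}

lemma hasFDerivAt_pd (j : Fin 2) (hw : DifferentiableAt ℝ (fderiv ℝ w) y) :
    HasFDerivAt (pd j w)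
      ((ContinuousLinearMap.apply ℝ (EuclideanSpace ℝ (Fin N)) (ee j)).comp
        (fderiv ℝ (fderiv ℝ w) y)) y :=
  (ContinuousLinearMap.apply ℝ (EuclideanSpace ℝ (Fin N)) (ee j)).hasFDerivAt.comp y
    hw.hasFDerivAt

lemma pd_pd (i j : Fin 2) (hw : DifferentiableAt ℝ (fderiv ℝ w) y) :
    pd i (pd j w) y = fderiv ℝ (fderiv ℝ w) y (ee i) (ee j) := by
  show fderiv ℝ (pd j w) y (ee i) = _
  rw [(hasFDerivAt_pd j hw).fderiv]
  rfl

lemma diffAt_fderiv (hw : ContDiff ℝ 2 w) (y : EuclideanSpace ℝ (Fin 2)) :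
    DifferentiableAt ℝ (fderiv ℝ w) y :=
  ((hw.fderiv_right (m := 1) (by norm_num)).differentiable (by norm_num)) y

lemma pd_swap (i j : Fin 2) (hw : ContDiff ℝ 2 w) (y : EuclideanSpace ℝ (Fin 2)) :
    pd i (pd j w) y = pd j (pd i w) y := by
  rw [pd_pd i j (diffAt_fderiv hw y), pd_pd j i (diffAt_fderiv hw y)]
  exact (hw.contDiffAt.isSymmSndFDerivAt (by simp)) _ _

lemma contDiff_pd {n : WithTop ℕ∞} (i : Fin 2) (hw : ContDiff ℝ (n + 1) w) :
    ContDiff ℝ n (pd i w) :=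
  (ContinuousLinearMap.apply ℝ (EuclideanSpace ℝ (Fin N)) (ee i)).contDiff.comp
    (hw.fderiv_right le_rfl)

end SGRL

open SGRL in
/-- The spatial gradients of a rotating wave profile are rotated by the
linearization: if `D Δu* + ω ∂_ψ u* + f(u*) = 0`, then
`L*(∂₁u*) = −ω ∂₂u*` and `L*(∂₂u*) = ω ∂₁u*`, where `L* v = D Δv + ω ∂_ψ v + f'(u*) v`. -/
theorem spatial_gradients_rotated_by_linearization (N : ℕ)
    (f : EuclideanSpace ℝ (Fin N) → EuclideanSpace ℝ (Fin N)) (hf : ContDiff ℝ 1 f)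
    (d : Fin N → ℝ) (hd : ∀ i, 0 < d i) (ω : ℝ)
    (u : EuclideanSpace ℝ (Fin 2) → EuclideanSpace ℝ (Fin N)) (hu : ContDiff ℝ 3 u)
    (hwave : ∀ y : EuclideanSpace ℝ (Fin 2),
      dmul d (lapOp u y) + ω • rotDeriv u y + f (u y) = 0) :
    ∀ y : EuclideanSpace ℝ (Fin 2),
      (dmul d (lapOp (pd 0 u) y) + ω • rotDeriv (pd 0 u) y +
          fderiv ℝ f (u y) (pd 0 u y) = -(ω • pd 1 u y)) ∧
      (dmul d (lapOp (pd 1 u) y) + ω • rotDeriv (pd 1 u) y +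
          fderiv ℝ f (u y) (pd 1 u y) = ω • pd 0 u y) := by
  intro y
  have hu2 : ContDiff ℝ 2 u := hu.of_le (by norm_num)
  have hpdu : ∀ i : Fin 2, ContDiff ℝ 2 (pd i u) :=
    fun i => contDiff_pd i (hu.of_le (by norm_num))
  have hDpd : ∀ i : Fin 2, DifferentiableAt ℝ (fderiv ℝ (pd i u)) y :=
    fun i => diffAt_fderiv (hpdu i) y
  have hDu : DifferentiableAt ℝ (fderiv ℝ u) y := diffAt_fderiv hu2 y
  -- derivative of the laplacian term
  have hlap : HasFDerivAt (lapOp u) _ y :=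
    (hasFDerivAt_pd 0 (hDpd 0)).add (hasFDerivAt_pd 1 (hDpd 1))
  have hG : HasFDerivAt (fun y => dmul d (lapOp u y)) _ y :=
    (dmulL d).hasFDerivAt.comp y hlap
  -- derivative of the rotational term
  have hR : HasFDerivAt (rotDeriv u) _ y :=
    ((EuclideanSpace.proj (0 : Fin 2)).hasFDerivAt.smul (hasFDerivAt_pd 1 hDu)).sub
      ((EuclideanSpace.proj (1 : Fin 2)).hasFDerivAt.smul (hasFDerivAt_pd 0 hDu))
  have hH : HasFDerivAt (fun y => ω • rotDeriv u y) _ y := hR.const_smul ω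
  -- derivative of the nonlinearity
  have hK : HasFDerivAt (fun y => f (u y))
      ((fderiv ℝ f (u y)).comp (fderiv ℝ u y)) y :=
    ((hf.differentiable (by norm_num)).differentiableAt.hasFDerivAt).comp y
      ((hu.differentiable (by norm_num)).differentiableAt.hasFDerivAt)
  have hT := (hG.add hH).add hK
  have hfun : (fun y => dmul d (lapOp u y) + ω • rotDeriv u y + f (u y))
      = fun _ => (0 : EuclideanSpace ℝ (Fin N)) := funext hwave
  have hzero : HasFDerivAt
      (fun y => dmul d (lapOp u y) + ω • rotDeriv u y + f (u y))
      (0 : EuclideanSpace ℝ (Fin 2) →L[ℝ] EuclideanSpace ℝ (Fin N)) y := by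
    rw [hfun]; exact hasFDerivAt_const _ _
  have heq := hT.unique hzero
  have key : ∀ i : Fin 2,
      dmul d (pd i (pd 0 (pd 0 u)) y) + dmul d (pd i (pd 1 (pd 1 u)) y)
        + ω • ((y 0 • pd i (pd 1 u) y + (if (0 : Fin 2) = i then pd 1 u y else 0))
            - (y 1 • pd i (pd 0 u) y + (if (1 : Fin 2) = i then pd 0 u y else 0)))
        + fderiv ℝ f (u y) (pd i u y) = 0 := by
    intro i
    have h := congrFun (congrArg DFunLike.coe heq) (ee i)
    rw [pd_pd i 0 (hDpd 0), pd_pd i 1 (hDpd 1), pd_pd i 1 hDu, pd_pd i 0 hDu,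
      dmul_eq, dmul_eq]
    simpa [ee, pd] using h
  have hswap01 : pd 1 (pd 0 u) = pd 0 (pd 1 u) := funext fun z => pd_swap 1 0 hu2 z
  have e2 : pd 1 (pd 0 u) y = pd 0 (pd 1 u) y := pd_swap 1 0 hu2 y
  constructor
  · have k := key 0
    norm_num at k
    have e1 : pd 1 (pd 1 (pd 0 u)) y = pd 0 (pd 1 (pd 1 u)) y := by
      rw [hswap01]; exact pd_swap 1 0 (hpdu 1) y
    rw [lapOp, rotDeriv, dmul_add, e1, e2]
    linear_combination (norm := module) k
  · have k := key 1
    norm_num at k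
    have e1 : pd 0 (pd 0 (pd 1 u)) y = pd 1 (pd 0 (pd 0 u)) y := by
      rw [← hswap01]; exact pd_swap 0 1 (hpdu 0) y
    rw [lapOp, rotDeriv, dmul_add, e1, ← e2]
    linear_combination (norm := module) k
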